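/- Fix r ≥ 1 and k ≥ 1 with |A| ≤ k. Let E_{>k} ⊆ Λ be the ideal generated by { e_m : m > k } and U ⊆ Λ the ideal generated by { uₙ : n ≥ 1 }. Then the ℚ-algebra homomorphism ℚ[x₁, …, x_k] → Λ/(U^r + E_{>k}) sending x_i to the class of E_i is surjective with kernel equal to the ideal (x₁, …, x_k)^r; in particular it induces an isomorphism ℚ[x₁, …, x_k]/(x₁, …, x_k)^r ≅ Λ/(U^r + E_{>k}), so the classes of the monomials E_ν, for ν an integer partition with at most k columns and fewer than r rows, form a ℚ-basis of Λ/(U^r + E_{>k}). -/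

import Mathlib

noncomputable section

/-- The ring of symmetric functions, modelled as the polynomial ring `ℚ[p₁, p₂, …]`
in countably many variables indexed by positive integers (the power sums). -/
abbrev SymmFn : Type := MvPolynomial ℕ+ ℚ

/-- The power sum `pₙ` (for `n ≥ 1`; junk value `0` for `n = 0`). -/
def pSym (n : ℕ) : SymmFn :=
  if h : 0 < n then MvPolynomial.X (⟨n, h⟩ : ℕ+) else 0

/-- The elementary symmetric functions, defined by `e₀ = 1` and Newton's recursion
`n·eₙ = ∑_{i=1}^{n} (−1)^{i−1} pᵢ e_{n−i}`. -/
def eSym : ℕ → SymmFn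
  | 0 => 1
  | n + 1 =>
      ((n + 1 : ℚ))⁻¹ •
        ∑ j ∈ Finset.range (n + 1), ((-1 : ℚ) ^ j) • (pSym (j + 1) * eSym (n - j))
  termination_by n => n
  decreasing_by exact Nat.lt_succ_of_le (Nat.sub_le _ _)

/-- `∑_{d | n} d·a_d` as a rational number. -/
def divSum (a : ℕ →₀ ℕ) (n : ℕ) : ℚ :=
  ((∑ d ∈ n.divisors, d * a d : ℕ) : ℚ)

/-- `uₙ = pₙ − ∑_{d | n} d·a_d`. -/
def uSym (a : ℕ →₀ ℕ) (n : ℕ) : SymmFn :=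
  pSym n - MvPolynomial.C (divSum a n)

/-- The ideal `E_{>k}` of `Λ` generated by the `e_m` with `m > k`. -/
def Egt (k : ℕ) : Ideal SymmFn :=
  Ideal.span {x : SymmFn | ∃ m : ℕ, k < m ∧ x = eSym m}

/-- The ideal `U` of `Λ` generated by the `uₙ`, `n ≥ 1`. -/
def Uideal (a : ℕ →₀ ℕ) : Ideal SymmFn :=
  Ideal.span {x : SymmFn | ∃ n : ℕ, 0 < n ∧ x = uSym a n}

/-- The polynomial `∏_{i ≥ 1} (1 − tⁱ)^{a_i}` (a finite product). -/
def cPoly (a : ℕ →₀ ℕ) : Polynomial ℚ :=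
  ∏ i ∈ a.support, (1 - Polynomial.X ^ i) ^ a i

/-- `c_m`, the coefficient of `t^m` in `∏_{i ≥ 1} (1 − tⁱ)^{a_i}`. -/
def cCoeff (a : ℕ →₀ ℕ) (m : ℕ) : ℚ :=
  (cPoly a).coeff m

/-- `E_m := −(−1)^m e_m + c_m`. -/
def ESym (a : ℕ →₀ ℕ) (m : ℕ) : SymmFn :=
  (-(-1 : ℚ) ^ m) • eSym m + MvPolynomial.C (cCoeff a m)

/-- The `ℚ`-algebra homomorphism `ℚ[x₁, …, x_k] → Λ/(U^r + E_{>k})` sending `x_i` to the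
class of `E_i`. -/
def EQuotHom (a : ℕ →₀ ℕ) (r k : ℕ) :
    MvPolynomial (Fin k) ℚ →ₐ[ℚ] SymmFn ⧸ ((Uideal a) ^ r + Egt k) :=
  MvPolynomial.aeval fun i : Fin k =>
    Ideal.Quotient.mk ((Uideal a) ^ r + Egt k) (ESym a ((i : ℕ) + 1))


/-! ### Auxiliary development -/

open Polynomial PowerSeries Finset MvPolynomial
section Aux

variable {B : Type} [CommRing B] [Algebra ℚ B]

/-- Newton recursion for power sums in terms of prescribed elementary values. -/
def newtonP (eb : ℕ → B) : ℕ → B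
  | 0 => 0
  | n + 1 =>
      ((-1 : ℚ) ^ n) • (((n + 1 : ℚ)) • eb (n + 1)
        - ∑ j ∈ (Finset.range n).attach,
            ((-1 : ℚ) ^ (j : ℕ)) • (newtonP eb ((j : ℕ) + 1) * eb (n - (j : ℕ))))
  termination_by n => n
  decreasing_by have := Finset.mem_range.mp j.2; omega

theorem newtonP_succ (eb : ℕ → B) (n : ℕ) :
    newtonP eb (n + 1) = ((-1 : ℚ) ^ n) • (((n + 1 : ℚ)) • eb (n + 1)
        - ∑ j ∈ Finset.range n, ((-1 : ℚ) ^ j) • (newtonP eb (j + 1) * eb (n - j))) := by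
  rw [newtonP, ← Finset.sum_attach (Finset.range n)
    (fun j => ((-1 : ℚ) ^ j) • (newtonP eb (j + 1) * eb (n - j)))]

theorem newtonP_natural {B' : Type} [CommRing B'] [Algebra ℚ B']
    (χ : B →ₐ[ℚ] B') (eb : ℕ → B) (n : ℕ) :
    χ (newtonP eb n) = newtonP (fun m => χ (eb m)) n := by
  induction n using Nat.strong_induction_on with
  | _ n ih =>
    match n with
    | 0 => rw [newtonP, newtonP, map_zero]
    | n + 1 =>
      rw [newtonP_succ, newtonP_succ]
      rw [map_smul, map_sub, map_smul, map_sum]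
      congr 2
      refine Finset.sum_congr rfl fun j hj => ?_
      rw [map_smul, map_mul, ih (j+1) (by simp only [Finset.mem_range] at hj; omega)]

theorem aeval_pSym_eq (eb : ℕ → B) (n : ℕ) (hn : 0 < n) :
    MvPolynomial.aeval (fun n : ℕ+ => newtonP eb (n : ℕ)) (pSym n) = newtonP eb n := by
  rw [pSym, dif_pos hn]; exact MvPolynomial.aeval_X _ _

theorem aeval_eSym_eq (eb : ℕ → B) (heb : eb 0 = 1) (m : ℕ) :
    MvPolynomial.aeval (fun n : ℕ+ => newtonP eb (n : ℕ)) (eSym m) = eb m := by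
  induction m using Nat.strong_induction_on with
  | _ m ih =>
    match m with
    | 0 => rw [eSym]; rw [map_one, heb]
    | n + 1 =>
      rw [eSym, map_smul, map_sum]
      have hterm : ∀ j ∈ Finset.range (n + 1),
          MvPolynomial.aeval (fun n : ℕ+ => newtonP eb (n : ℕ))
              (((-1 : ℚ) ^ j) • (pSym (j + 1) * eSym (n - j)))
            = ((-1 : ℚ) ^ j) • (newtonP eb (j + 1) * eb (n - j)) := by
        intro j hj
        rw [map_smul, map_mul, aeval_pSym_eq eb (j + 1) (Nat.succ_pos j),
          ih (n - j) (by omega)]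
      rw [Finset.sum_congr rfl hterm, Finset.sum_range_succ, Nat.sub_self, heb, mul_one,
        newtonP_succ, smul_smul]
      have h1 : ((-1 : ℚ) ^ n) * ((-1 : ℚ) ^ n) = 1 := by
        rw [← mul_pow]; norm_num
      rw [h1, one_smul]
      have h2 : ∀ (S A : B), S + (A - S) = A := fun S A => by ring
      rw [h2, smul_smul, inv_mul_cancel₀ (by positivity : (n + 1 : ℚ) ≠ 0), one_smul]

end Aux

section Key

open Polynomial PowerSeries Finset

theorem deriv_finprod {ι : Type} [DecidableEq ι] (s : Finset ι) (f : ι → Polynomial ℚ) :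
    Polynomial.derivative (∏ i ∈ s, f i)
      = ∑ d ∈ s, (∏ i ∈ s.erase d, f i) * Polynomial.derivative (f d) := by
  induction s using Finset.induction with
  | empty => simp
  | @insert x s hx ih =>
    rw [Finset.prod_insert hx, Polynomial.derivative_mul, ih, Finset.sum_insert hx,
      Finset.erase_insert hx, Finset.mul_sum]
    congr 1
    · exact mul_comm _ _
    · refine Finset.sum_congr rfl fun d hd => ?_
      rw [Finset.erase_insert_of_ne (by rintro rfl; exact hx hd), Finset.prod_insert
        (fun hc => hx (Finset.mem_of_mem_erase hc))]
      ring

theorem lemma1 (a : ℕ →₀ ℕ) (ha0 : a 0 = 0) :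
    Polynomial.X * Polynomial.derivative (cPoly a) * (∏ i ∈ a.support, (1 - Polynomial.X ^ i))
      = -(cPoly a * ∑ d ∈ a.support, Polynomial.C ((d : ℚ) * (a d : ℚ)) *
          (Polynomial.X ^ d * ∏ i ∈ a.support.erase d, (1 - Polynomial.X ^ i))) := by
  rw [cPoly, deriv_finprod, Finset.mul_sum, Finset.sum_mul, Finset.mul_sum,
    ← Finset.sum_neg_distrib]
  refine Finset.sum_congr rfl fun d hd => ?_
  have had : a d ≠ 0 := Finsupp.mem_support_iff.mp hd
  have hd0 : d ≠ 0 := by rintro rfl; exact had ha0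
  rw [Polynomial.derivative_pow, Polynomial.derivative_sub, Polynomial.derivative_one,
    Polynomial.derivative_X_pow, zero_sub]
  rw [← Finset.mul_prod_erase _ _ hd, ← Finset.mul_prod_erase _ (fun i => (1 - Polynomial.X ^ i) ^ a i) hd]
  set P := ∏ i ∈ a.support.erase d, ((1 : Polynomial ℚ) - Polynomial.X ^ i) ^ a i with hP
  set Q := ∏ i ∈ a.support.erase d, ((1 : Polynomial ℚ) - Polynomial.X ^ i) with hQ
  obtain ⟨b, hb⟩ : ∃ b, a d = b + 1 := ⟨a d - 1, (Nat.succ_pred_eq_of_pos (Nat.pos_of_ne_zero had)).symm⟩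
  obtain ⟨e, he⟩ : ∃ e, d = e + 1 := ⟨d - 1, (Nat.succ_pred_eq_of_pos (Nat.pos_of_ne_zero hd0)).symm⟩
  rw [hb, he]
  simp only [Nat.add_sub_cancel]
  rw [map_mul]
  push_cast
  ring

def Gser (d : ℕ) : PowerSeries ℚ := PowerSeries.mk fun n => if d ∣ n ∧ n ≠ 0 then 1 else 0

theorem geo (d : ℕ) (hd : d ≠ 0) : Gser d * (1 - (PowerSeries.X : PowerSeries ℚ) ^ d)
    = PowerSeries.X ^ d := by
  ext n
  rw [mul_sub, mul_one, map_sub, PowerSeries.coeff_mul_X_pow', Gser, PowerSeries.coeff_mk,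
    PowerSeries.coeff_X_pow]
  simp only [PowerSeries.coeff_mk]
  by_cases hn : n = d
  · subst hn
    rw [if_pos rfl, if_pos ⟨dvd_rfl, hd⟩, if_pos le_rfl, Nat.sub_self,
      if_neg (by simp)]
    ring
  · rw [if_neg hn]
    by_cases h1 : d ∣ n ∧ n ≠ 0
    · have hdn : d ≤ n := Nat.le_of_dvd (Nat.pos_of_ne_zero h1.2) h1.1
      have h2 : d ∣ n - d := Nat.dvd_sub h1.1 dvd_rfl
      have h3 : n - d ≠ 0 := by
        have : n ≠ d := hn
        have : n ≠ 0 := h1.2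
        omega
      rw [if_pos h1, if_pos hdn, if_pos ⟨h2, h3⟩]
      ring
    · rw [if_neg h1]
      by_cases hdn : d ≤ n
      · rw [if_pos hdn]
        have h4 : ¬ (d ∣ n - d ∧ n - d ≠ 0) := by
          rintro ⟨ha, hb⟩
          apply h1
          refine ⟨?_, by omega⟩
          have := Nat.dvd_add ha (dvd_refl d)
          rwa [Nat.sub_add_cancel hdn] at this
        rw [if_neg h4]
        ring
      · rw [if_neg hdn]
        ring

theorem hS (a : ℕ →₀ ℕ) :
    PowerSeries.mk (divSum a) = ∑ d ∈ a.support, PowerSeries.C ((d:ℚ) * (a d:ℚ)) * Gser d := by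
  ext n
  rw [PowerSeries.coeff_mk, map_sum]
  simp only [Gser, PowerSeries.coeff_C_mul, PowerSeries.coeff_mk, mul_ite, mul_one, mul_zero]
  have hcond : ∀ d : ℕ, (if d ∣ n ∧ n ≠ 0 then ((d:ℚ) * (a d:ℚ)) else 0)
      = (if d ∈ n.divisors then ((d:ℚ) * (a d:ℚ)) else 0) := fun d => by
    refine if_congr ?_ rfl rfl
    exact (Nat.mem_divisors).symm
  rw [Finset.sum_congr rfl fun d _ => hcond d, Finset.sum_ite_mem]
  rw [divSum]
  push_cast
  refine (Finset.sum_subset (Finset.inter_subset_right) fun x hx hx2 => ?_).symm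
  have hax : a x = 0 := by
    by_contra h
    exact hx2 (Finset.mem_inter.mpr ⟨Finsupp.mem_support_iff.mpr h, hx⟩)
  simp [hax]


theorem lemma2 (a : ℕ →₀ ℕ) (ha0 : a 0 = 0) :
    ((∑ d ∈ a.support, Polynomial.C ((d:ℚ) * (a d:ℚ)) *
        (Polynomial.X ^ d * ∏ i ∈ a.support.erase d, (1 - Polynomial.X ^ i)) : Polynomial ℚ) :
          PowerSeries ℚ)
      = PowerSeries.mk (divSum a) *
        ((∏ i ∈ a.support, (1 - Polynomial.X ^ i) : Polynomial ℚ) : PowerSeries ℚ) := by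
  rw [hS a, Finset.sum_mul, ← Polynomial.coeToPowerSeries.ringHom_apply, map_sum]
  refine Finset.sum_congr rfl fun d hd => ?_
  have hd0 : d ≠ 0 := fun h => Finsupp.mem_support_iff.mp hd (h ▸ ha0)
  rw [Polynomial.coeToPowerSeries.ringHom_apply]
  rw [show (∏ i ∈ a.support, (1 - Polynomial.X ^ i) : Polynomial ℚ)
      = (1 - Polynomial.X ^ d) * ∏ i ∈ a.support.erase d, (1 - Polynomial.X ^ i) from
      (Finset.mul_prod_erase _ _ hd).symm]
  push_cast
  have hgeo := geo d hd0
  linear_combination (-(PowerSeries.C ((d:ℚ) * (a d:ℚ)) *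
    ((∏ i ∈ a.support.erase d, (1 - Polynomial.X ^ i) : Polynomial ℚ) : PowerSeries ℚ))) * hgeo

theorem prodW_coeff_zero (a : ℕ →₀ ℕ) (ha0 : a 0 = 0) :
    (∏ i ∈ a.support, ((1 : Polynomial ℚ) - Polynomial.X ^ i)).coeff 0 = 1 := by
  rw [Polynomial.coeff_zero_eq_eval_zero, Polynomial.eval_prod]
  refine Finset.prod_eq_one fun i hi => ?_
  have hi0 : i ≠ 0 := fun h => Finsupp.mem_support_iff.mp hi (h ▸ ha0)
  simp [zero_pow hi0]


theorem divSum_zero (a : ℕ →₀ ℕ) : divSum a 0 = 0 := by simp [divSum]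


theorem key_recursion (a : ℕ →₀ ℕ) (ha0 : a 0 = 0) (n : ℕ) :
    ((n : ℚ) + 1) * (cPoly a).coeff (n + 1)
      + ∑ j ∈ Finset.range (n + 1), divSum a (j + 1) * (cPoly a).coeff (n - j) = 0 := by
  set W : Polynomial ℚ := ∏ i ∈ a.support, (1 - Polynomial.X ^ i) with hWdef
  have hW0 : (W : PowerSeries ℚ) ≠ 0 := by
    intro h
    have h2 := congrArg (PowerSeries.constantCoeff) h
    rw [Polynomial.constantCoeff_coe, map_zero, prodW_coeff_zero a ha0] at h2
    exact one_ne_zero h2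
  -- main power series identity
  have hpoly := lemma1 a ha0
  have hcoe := congrArg (fun p : Polynomial ℚ => (p : PowerSeries ℚ)) hpoly
  simp only [Polynomial.coe_mul, Polynomial.coe_neg] at hcoe
  rw [lemma2 a ha0] at hcoe
  have hE : ((Polynomial.X : Polynomial ℚ) : PowerSeries ℚ) *
        ((Polynomial.derivative (cPoly a) : Polynomial ℚ) : PowerSeries ℚ)
      + ((cPoly a : Polynomial ℚ) : PowerSeries ℚ) * PowerSeries.mk (divSum a) = 0 := by
    have hfac : (((Polynomial.X : Polynomial ℚ) : PowerSeries ℚ) *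
          ((Polynomial.derivative (cPoly a) : Polynomial ℚ) : PowerSeries ℚ)
        + ((cPoly a : Polynomial ℚ) : PowerSeries ℚ) * PowerSeries.mk (divSum a)) *
          (W : PowerSeries ℚ) = 0 := by
      linear_combination hcoe
    exact (mul_eq_zero.mp hfac).resolve_right hW0
  have hcf := congrArg (PowerSeries.coeff (n + 1)) hE
  rw [map_add, map_zero, PowerSeries.coeff_mul, PowerSeries.coeff_mul] at hcf
  rw [Finset.Nat.sum_antidiagonal_eq_sum_range_succ_mk, Finset.Nat.sum_antidiagonal_eq_sum_range_succ_mk] at hcf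
  -- first term: X has coeff 1 only at 1
  have hX : ∀ k ∈ Finset.range (n + 2),
      (PowerSeries.coeff k) ((Polynomial.X : Polynomial ℚ) : PowerSeries ℚ) *
        (PowerSeries.coeff (n + 1 - k)) ((Polynomial.derivative (cPoly a) : Polynomial ℚ) :
          PowerSeries ℚ)
      = if k = 1 then (cPoly a).coeff (n + 1) * ((n : ℚ) + 1) else 0 := by
    intro k hk
    rw [Polynomial.coeff_coe, Polynomial.coeff_coe, Polynomial.coeff_X]
    by_cases h1 : k = 1
    · subst h1
      rw [if_pos rfl, if_pos rfl, one_mul]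
      have : n + 1 - 1 = n := rfl
      rw [this, Polynomial.coeff_derivative]
    · rw [if_neg (fun h => h1 h.symm), if_neg h1, zero_mul]
  rw [Finset.sum_congr rfl hX, Finset.sum_ite_eq' (Finset.range (n + 2)) 1
    (fun _ => (cPoly a).coeff (n + 1) * ((n : ℚ) + 1)),
    if_pos (by simp : (1 : ℕ) ∈ Finset.range (n + 2))] at hcf
  -- second term
  rw [Finset.sum_range_succ] at hcf
  simp only [Polynomial.coeff_coe, PowerSeries.coeff_mk] at hcf
  rw [Nat.sub_self, divSum_zero, mul_zero, add_zero] at hcf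
  have hreflect : ∑ j ∈ Finset.range (n + 1), divSum a (j + 1) * (cPoly a).coeff (n - j)
      = ∑ k ∈ Finset.range (n + 1), (cPoly a).coeff k * divSum a (n + 1 - k) := by
    rw [← Finset.sum_range_reflect (fun k => (cPoly a).coeff k * divSum a (n + 1 - k)) (n + 1)]
    refine Finset.sum_congr rfl fun j hj => ?_
    have hj' := Finset.mem_range.mp hj
    have h1 : n + 1 - 1 - j = n - j := by omega
    have h2 : n + 1 - (n - j) = j + 1 := by omega
    rw [h1, h2, mul_comm]
  rw [hreflect]
  linear_combination hcf

theorem cCoeff_zero (a : ℕ →₀ ℕ) (ha0 : a 0 = 0) : cCoeff a 0 = 1 := by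
  rw [cCoeff, cPoly, Polynomial.coeff_zero_eq_eval_zero, Polynomial.eval_prod]
  refine Finset.prod_eq_one fun i hi => ?_
  have hi0 : i ≠ 0 := fun h => Finsupp.mem_support_iff.mp hi (h ▸ ha0)
  simp [zero_pow hi0]

theorem cCoeff_eq_zero_of_lt (a : ℕ →₀ ℕ) {m : ℕ} (hm : ∑ i ∈ a.support, i * a i < m) :
    cCoeff a m = 0 := by
  rw [cCoeff]
  refine Polynomial.coeff_eq_zero_of_natDegree_lt (lt_of_le_of_lt ?_ hm)
  rw [cPoly]
  refine le_trans (Polynomial.natDegree_prod_le _ _) (Finset.sum_le_sum fun i hi => ?_)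
  refine le_trans (Polynomial.natDegree_pow_le) ?_
  rw [mul_comm]
  refine Nat.mul_le_mul_right _ ?_
  refine le_trans (Polynomial.natDegree_sub_le _ _) ?_
  simp [Polynomial.natDegree_X_pow]

theorem newtonP_c_eq_divSum (a : ℕ →₀ ℕ) (ha0 : a 0 = 0) (n : ℕ) :
    newtonP (fun m => ((-1 : ℚ) ^ m) * cCoeff a m) n = divSum a n := by
  induction n using Nat.strong_induction_on with
  | _ n ih =>
  match n with
  | 0 => rw [newtonP, divSum]; simp
  | n + 1 =>
    rw [newtonP_succ]
    have hsum : ∀ j ∈ Finset.range n,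
        ((-1 : ℚ) ^ j) • (newtonP (fun m => ((-1 : ℚ) ^ m) * cCoeff a m) (j + 1) *
            ((fun m => ((-1 : ℚ) ^ m) * cCoeff a m) (n - j)))
          = ((-1 : ℚ) ^ n) * (divSum a (j + 1) * cCoeff a (n - j)) := by
      intro j hj
      have hj' := Finset.mem_range.mp hj
      rw [ih (j + 1) (by omega), smul_eq_mul]
      show (-1 : ℚ) ^ j * (divSum a (j + 1) * ((-1 : ℚ) ^ (n - j) * cCoeff a (n - j)))
          = ((-1 : ℚ) ^ n) * (divSum a (j + 1) * cCoeff a (n - j))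
      rw [show (-1 : ℚ) ^ j * (divSum a (j + 1) * ((-1 : ℚ) ^ (n - j) * cCoeff a (n - j)))
          = ((-1 : ℚ) ^ j * (-1 : ℚ) ^ (n - j)) * (divSum a (j + 1) * cCoeff a (n - j)) by ring,
        ← pow_add, (by omega : j + (n - j) = n)]
    rw [Finset.sum_congr rfl hsum, ← Finset.mul_sum]
    have hkey := key_recursion a ha0 n
    simp only [show ∀ m, (cPoly a).coeff m = cCoeff a m from fun _ => rfl] at hkey
    rw [Finset.sum_range_succ, Nat.sub_self, cCoeff_zero a ha0, mul_one] at hkey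
    have ht : (-1 : ℚ) ^ n * (-1 : ℚ) ^ n = 1 := by rw [← mul_pow]; norm_num
    rw [smul_eq_mul, smul_eq_mul]
    show (-1 : ℚ) ^ n * (((n : ℚ) + 1) * ((-1 : ℚ) ^ (n + 1) * cCoeff a (n + 1))
        - (-1 : ℚ) ^ n * ∑ j ∈ Finset.range n, divSum a (j + 1) * cCoeff a (n - j))
      = divSum a (n + 1)
    rw [pow_succ]
    linear_combination (-1 : ℚ) * hkey
      + (-(((n : ℚ) + 1) * cCoeff a (n + 1))
          - (∑ j ∈ Finset.range n, divSum a (j + 1) * cCoeff a (n - j))) * ht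

end Key



/-! ### Structural lemmas -/

section Struct

open MvPolynomial

theorem pSym_coe (i : ℕ+) : pSym (i : ℕ) = MvPolynomial.X i := by
  simp [pSym]; rfl

/-- Evaluation `Λ → ℚ`, `pₙ ↦ divSum a n`. -/
def epsAlg (a : ℕ →₀ ℕ) : SymmFn →ₐ[ℚ] ℚ :=
  MvPolynomial.aeval fun n : ℕ+ => divSum a (n : ℕ)

theorem epsAlg_eq (a : ℕ →₀ ℕ) (ha0 : a 0 = 0) :
    epsAlg a = MvPolynomial.aeval
      (fun n : ℕ+ => newtonP (fun m => ((-1 : ℚ) ^ m) * cCoeff a m) (n : ℕ)) := by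
  rw [epsAlg]
  congr 1
  funext n
  rw [newtonP_c_eq_divSum a ha0]

theorem epsAlg_eSym (a : ℕ →₀ ℕ) (ha0 : a 0 = 0) (m : ℕ) :
    epsAlg a (eSym m) = ((-1 : ℚ) ^ m) * cCoeff a m := by
  rw [epsAlg_eq a ha0]
  exact aeval_eSym_eq _ (by rw [pow_zero, one_mul, cCoeff_zero a ha0]) m

theorem epsAlg_ESym (a : ℕ →₀ ℕ) (ha0 : a 0 = 0) (m : ℕ) :
    epsAlg a (ESym a m) = 0 := by
  rw [ESym, map_add, map_smul, epsAlg_eSym a ha0]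
  have : (epsAlg a) (MvPolynomial.C (cCoeff a m)) = cCoeff a m := by
    rw [show (MvPolynomial.C : ℚ →+* SymmFn) (cCoeff a m)
        = algebraMap ℚ SymmFn (cCoeff a m) from rfl, AlgHom.commutes]
    rfl
  rw [this, smul_eq_mul]
  have ht : (-1 : ℚ) ^ m * (-1 : ℚ) ^ m = 1 := by rw [← mul_pow]; norm_num
  linear_combination (-(cCoeff a m)) * ht

theorem sub_C_epsAlg_mem (a : ℕ →₀ ℕ) (g : SymmFn) :
    g - MvPolynomial.C (epsAlg a g) ∈ Uideal a := by
  induction g using MvPolynomial.induction_on with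
  | C q =>
    rw [show (epsAlg a) (MvPolynomial.C q) = q from by
      rw [show (MvPolynomial.C : ℚ →+* SymmFn) q = algebraMap ℚ SymmFn q from rfl,
        AlgHom.commutes]; rfl]
    rw [sub_self]
    exact zero_mem _
  | add p q hp hq =>
    have : p + q - MvPolynomial.C ((epsAlg a) (p + q))
        = (p - MvPolynomial.C ((epsAlg a) p)) + (q - MvPolynomial.C ((epsAlg a) q)) := by
      rw [map_add, map_add]; ring
    rw [this]
    exact add_mem hp hq
  | mul_X p i hp =>
    have hgen : MvPolynomial.X i - MvPolynomial.C (divSum a (i : ℕ)) ∈ Uideal a := by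
      refine Ideal.subset_span ⟨(i : ℕ), i.2, ?_⟩
      rw [uSym, pSym_coe]
    have hXi : (epsAlg a) (MvPolynomial.X i) = divSum a (i : ℕ) := by
      rw [epsAlg, MvPolynomial.aeval_X]
    have : p * MvPolynomial.X i - MvPolynomial.C ((epsAlg a) (p * MvPolynomial.X i))
        = (p - MvPolynomial.C ((epsAlg a) p)) * MvPolynomial.X i
          + MvPolynomial.C ((epsAlg a) p) *
            (MvPolynomial.X i - MvPolynomial.C (divSum a (i : ℕ))) := by
      rw [map_mul, hXi, map_mul]; ring
    rw [this]
    exact add_mem (Ideal.mul_mem_right _ _ hp) (Ideal.mul_mem_left _ _ hgen)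

theorem ESym_mem_Uideal (a : ℕ →₀ ℕ) (ha0 : a 0 = 0) (m : ℕ) :
    ESym a m ∈ Uideal a := by
  have h := sub_C_epsAlg_mem a (ESym a m)
  rwa [epsAlg_ESym a ha0, map_zero, sub_zero] at h

end Struct

section Psi

open MvPolynomial

/-- Target values for the elementary symmetric functions in `ℚ[x₁,…,x_k]`. -/
def tgt (a : ℕ →₀ ℕ) (k : ℕ) : ℕ → MvPolynomial (Fin k) ℚ := fun m =>
  if h : 1 ≤ m ∧ m ≤ k then
    ((-1 : ℚ) ^ m) • (MvPolynomial.C (cCoeff a m) - MvPolynomial.X (⟨m - 1, by omega⟩ : Fin k))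
  else if m = 0 then 1 else 0

theorem tgt_zero (a : ℕ →₀ ℕ) (k : ℕ) : tgt a k 0 = 1 := by
  rw [tgt]; norm_num

/-- The left inverse `Λ → ℚ[x₁,…,x_k]`. -/
def psiHom (a : ℕ →₀ ℕ) (k : ℕ) : SymmFn →ₐ[ℚ] MvPolynomial (Fin k) ℚ :=
  MvPolynomial.aeval fun n : ℕ+ => newtonP (tgt a k) (n : ℕ)

theorem psiHom_eSym (a : ℕ →₀ ℕ) (k m : ℕ) : psiHom a k (eSym m) = tgt a k m :=
  aeval_eSym_eq _ (tgt_zero a k) m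

theorem psiHom_eSym_gt (a : ℕ →₀ ℕ) {k m : ℕ} (hm : k < m) : psiHom a k (eSym m) = 0 := by
  rw [psiHom_eSym, tgt, dif_neg (by omega), if_neg (by omega)]

theorem psiHom_C (a : ℕ →₀ ℕ) (k : ℕ) (q : ℚ) :
    psiHom a k (MvPolynomial.C q) = MvPolynomial.C q := by
  rw [show (MvPolynomial.C : ℚ →+* SymmFn) q = algebraMap ℚ SymmFn q from rfl, AlgHom.commutes]
  rw [MvPolynomial.algebraMap_eq]

theorem psiHom_ESym (a : ℕ →₀ ℕ) (k : ℕ) (i : Fin k) :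
    psiHom a k (ESym a ((i : ℕ) + 1)) = MvPolynomial.X i := by
  rw [ESym, map_add, map_smul, psiHom_eSym, psiHom_C]
  rw [tgt, dif_pos ⟨by omega, by have := i.isLt; omega⟩, smul_smul]
  have h1 : (-(-1 : ℚ) ^ ((i : ℕ) + 1)) * ((-1 : ℚ) ^ ((i : ℕ) + 1)) = -1 := by
    rw [neg_mul, ← mul_pow]; norm_num
  have hidx : (⟨(i : ℕ) + 1 - 1, by have := i.isLt; omega⟩ : Fin k) = i := by
    apply Fin.ext; simp
  rw [h1, hidx, neg_one_smul]
  ring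

/-- Evaluation of `ℚ[x₁,…,x_k]` at the origin. -/
def chi0 (k : ℕ) : MvPolynomial (Fin k) ℚ →ₐ[ℚ] ℚ :=
  MvPolynomial.aeval fun _ : Fin k => (0 : ℚ)

theorem chi0_C (k : ℕ) (q : ℚ) : chi0 k (MvPolynomial.C q) = q := by
  rw [show (MvPolynomial.C : ℚ →+* MvPolynomial (Fin k) ℚ) q
      = algebraMap ℚ (MvPolynomial (Fin k) ℚ) q from (MvPolynomial.algebraMap_eq ℚ (Fin k)).symm ▸ rfl]
  rw [AlgHom.commutes]
  rfl

theorem chi0_tgt (a : ℕ →₀ ℕ) (ha0 : a 0 = 0) {k : ℕ}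
    (hA : ∑ i ∈ a.support, i * a i ≤ k) (m : ℕ) :
    chi0 k (tgt a k m) = ((-1 : ℚ) ^ m) * cCoeff a m := by
  rw [tgt]
  by_cases h : 1 ≤ m ∧ m ≤ k
  · rw [dif_pos h, map_smul, map_sub, chi0_C, chi0, MvPolynomial.aeval_X, sub_zero,
      smul_eq_mul]
  · rw [dif_neg h]
    by_cases h0 : m = 0
    · subst h0
      rw [if_pos rfl, map_one, cCoeff_zero a ha0, pow_zero, one_mul]
    · rw [if_neg h0, map_zero, cCoeff_eq_zero_of_lt a (lt_of_le_of_lt hA (by omega)), mul_zero]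

theorem chi0_newtonP (a : ℕ →₀ ℕ) (ha0 : a 0 = 0) {k : ℕ}
    (hA : ∑ i ∈ a.support, i * a i ≤ k) (n : ℕ) :
    chi0 k (newtonP (tgt a k) n) = divSum a n := by
  rw [newtonP_natural (chi0 k) (tgt a k) n,
    show (fun m => chi0 k (tgt a k m)) = fun m => ((-1 : ℚ) ^ m) * cCoeff a m from
      funext (chi0_tgt a ha0 hA)]
  exact newtonP_c_eq_divSum a ha0 n

theorem sub_C_chi0_mem (k : ℕ) (g : MvPolynomial (Fin k) ℚ) :
    g - MvPolynomial.C (chi0 k g)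
      ∈ Ideal.span (Set.range (MvPolynomial.X : Fin k → MvPolynomial (Fin k) ℚ)) := by
  induction g using MvPolynomial.induction_on with
  | C q => rw [chi0_C, sub_self]; exact zero_mem _
  | add p q hp hq =>
    have : p + q - MvPolynomial.C ((chi0 k) (p + q))
        = (p - MvPolynomial.C ((chi0 k) p)) + (q - MvPolynomial.C ((chi0 k) q)) := by
      rw [map_add, map_add]; ring
    rw [this]
    exact add_mem hp hq
  | mul_X p i hp =>
    have hXi : (chi0 k) (MvPolynomial.X i) = 0 := by rw [chi0, MvPolynomial.aeval_X]
    have : p * MvPolynomial.X i - MvPolynomial.C ((chi0 k) (p * MvPolynomial.X i))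
        = (p - MvPolynomial.C ((chi0 k) p)) * MvPolynomial.X i
          + MvPolynomial.C ((chi0 k) p) * MvPolynomial.X i
          - MvPolynomial.C ((chi0 k) p) * MvPolynomial.C ((chi0 k) (MvPolynomial.X i)) := by
      rw [map_mul, map_mul]; ring
    rw [this, hXi, map_zero, mul_zero, sub_zero]
    exact add_mem (Ideal.mul_mem_right _ _ hp)
      (Ideal.mul_mem_left _ _ (Ideal.subset_span ⟨i, rfl⟩))

theorem psiHom_pSym (a : ℕ →₀ ℕ) (k : ℕ) {n : ℕ} (hn : 0 < n) :
    psiHom a k (pSym n) = newtonP (tgt a k) n :=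
  aeval_pSym_eq (tgt a k) n hn

theorem psiHom_uSym_mem (a : ℕ →₀ ℕ) (ha0 : a 0 = 0) {k : ℕ}
    (hA : ∑ i ∈ a.support, i * a i ≤ k) {n : ℕ} (hn : 0 < n) :
    psiHom a k (uSym a n)
      ∈ Ideal.span (Set.range (MvPolynomial.X : Fin k → MvPolynomial (Fin k) ℚ)) := by
  have h := sub_C_chi0_mem k (psiHom a k (uSym a n))
  have hval : chi0 k (psiHom a k (uSym a n)) = 0 := by
    rw [uSym, map_sub, psiHom_pSym a k hn, psiHom_C, map_sub, chi0_newtonP a ha0 hA, chi0_C,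
      sub_self]
  rwa [hval, map_zero, sub_zero] at h

end Psi

section Main

open MvPolynomial

/-- Evaluation of `ℚ[x₁,…,x_k]` at the `E`'s. -/
def aevalE (a : ℕ →₀ ℕ) (k : ℕ) : MvPolynomial (Fin k) ℚ →ₐ[ℚ] SymmFn :=
  MvPolynomial.aeval fun i : Fin k => ESym a ((i : ℕ) + 1)

theorem EQuotHom_eq (a : ℕ →₀ ℕ) (r k : ℕ) (g : MvPolynomial (Fin k) ℚ) :
    EQuotHom a r k g = Ideal.Quotient.mk ((Uideal a) ^ r + Egt k) (aevalE a k g) := by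
  have h : EQuotHom a r k
      = (Ideal.Quotient.mkₐ ℚ ((Uideal a) ^ r + Egt k)).comp (aevalE a k) := by
    apply MvPolynomial.algHom_ext
    intro i
    rw [EQuotHom, MvPolynomial.aeval_X, AlgHom.comp_apply, aevalE, MvPolynomial.aeval_X,
      Ideal.Quotient.mkₐ_eq_mk]
  rw [h, AlgHom.comp_apply, Ideal.Quotient.mkₐ_eq_mk]

theorem psiHom_aevalE (a : ℕ →₀ ℕ) (k : ℕ) (g : MvPolynomial (Fin k) ℚ) :
    psiHom a k (aevalE a k g) = g := by
  have h : (psiHom a k).comp (aevalE a k) = AlgHom.id ℚ (MvPolynomial (Fin k) ℚ) := by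
    apply MvPolynomial.algHom_ext
    intro i
    rw [AlgHom.comp_apply, aevalE, MvPolynomial.aeval_X, psiHom_ESym, AlgHom.id_apply]
  calc psiHom a k (aevalE a k g) = ((psiHom a k).comp (aevalE a k)) g := rfl
    _ = g := by rw [h, AlgHom.id_apply]

set_option maxHeartbeats 1000000 in
theorem EQuotHom_surjective_ker' (a : ℕ →₀ ℕ) (ha0 : a 0 = 0) (r k : ℕ)
    (hr : 1 ≤ r) (hk : 1 ≤ k) (hA : ∑ i ∈ a.support, i * a i ≤ k) :
    Function.Surjective (EQuotHom a r k) ∧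
      RingHom.ker (EQuotHom a r k) =
        (Ideal.span (Set.range (MvPolynomial.X : Fin k → MvPolynomial (Fin k) ℚ))) ^ r := by
  set I : Ideal SymmFn := (Uideal a) ^ r + Egt k with hIdef
  set M : Ideal (MvPolynomial (Fin k) ℚ) :=
    Ideal.span (Set.range (MvPolynomial.X : Fin k → MvPolynomial (Fin k) ℚ)) with hMdef
  have hIsup : I = (Uideal a) ^ r ⊔ Egt k := by rw [hIdef, Submodule.add_eq_sup]
  have hEgt_le : Egt k ≤ I := by rw [hIsup]; exact le_sup_right
  have hUr_le : (Uideal a) ^ r ≤ I := by rw [hIsup]; exact le_sup_left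
  -- elementary symmetric functions are in the range
  have heSym : ∀ m : ℕ, Ideal.Quotient.mk I (eSym m) ∈ (EQuotHom a r k).range := by
    intro m
    rcases Nat.lt_or_ge k m with hm | hm
    · have hmem : eSym m ∈ I := hEgt_le (Ideal.subset_span ⟨m, hm, rfl⟩)
      rw [Ideal.Quotient.eq_zero_iff_mem.mpr hmem]
      exact zero_mem _
    · by_cases hm0 : m = 0
      · subst hm0
        rw [(by rw [eSym] : eSym 0 = 1), map_one]
        exact one_mem _
      · have h1 : 1 ≤ m := Nat.pos_of_ne_zero hm0
        have hesym : eSym m = ((-1 : ℚ) ^ m) • (MvPolynomial.C (cCoeff a m) : SymmFn)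
            - ((-1 : ℚ) ^ m) • ESym a m := by
          rw [ESym, smul_add, smul_smul]
          have hne : ((-1 : ℚ) ^ m) * (-(-1 : ℚ) ^ m) = -1 := by
            rw [mul_neg, ← mul_pow]; norm_num
          rw [hne, neg_one_smul]
          abel
        rw [hesym, map_sub]
        have hsm : ∀ (c : ℚ) (x : SymmFn), Ideal.Quotient.mk I (c • x)
            = c • Ideal.Quotient.mk I x := fun c x => by
          rw [← Ideal.Quotient.mkₐ_eq_mk ℚ I, map_smul]
        rw [hsm, hsm]
        refine sub_mem (Subalgebra.smul_mem _ ?_ _) (Subalgebra.smul_mem _ ?_ _)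
        · rw [show (MvPolynomial.C (cCoeff a m) : SymmFn)
              = algebraMap ℚ SymmFn (cCoeff a m) from rfl,
            ← Ideal.Quotient.mkₐ_eq_mk ℚ I, AlgHom.commutes]
          exact Subalgebra.algebraMap_mem _ _
        · have hlt : m - 1 < k := by omega
          refine ⟨MvPolynomial.X (⟨m - 1, hlt⟩ : Fin k), ?_⟩
          show (MvPolynomial.aeval fun i : Fin k =>
              Ideal.Quotient.mk ((Uideal a) ^ r + Egt k) (ESym a ((i : ℕ) + 1)))
              (MvPolynomial.X (⟨m - 1, hlt⟩ : Fin k)) = Ideal.Quotient.mk I (ESym a m)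
          rw [MvPolynomial.aeval_X]
          have hval : (((⟨m - 1, hlt⟩ : Fin k) : ℕ)) + 1 = m := by
            simp only [Fin.val_mk]; omega
          rw [hval]
  -- power sums are in the range
  have hpSym : ∀ n : ℕ, Ideal.Quotient.mk I (pSym n) ∈ (EQuotHom a r k).range := by
    intro n
    induction n using Nat.strong_induction_on with
    | _ n ih =>
    match n with
    | 0 =>
      rw [pSym, dif_neg (lt_irrefl 0), map_zero]
      exact zero_mem _
    | n + 1 =>
      have hT : (((n : ℚ) + 1)) • eSym (n + 1)
          = ∑ j ∈ Finset.range (n + 1), ((-1 : ℚ) ^ j) • (pSym (j + 1) * eSym (n - j)) := by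
        rw [eSym, smul_smul, mul_inv_cancel₀ (by positivity : ((n : ℚ) + 1) ≠ 0), one_smul]
      have hrel : pSym (n + 1) = ((-1 : ℚ) ^ n) • ((((n : ℚ) + 1)) • eSym (n + 1)
          - ∑ j ∈ Finset.range n, ((-1 : ℚ) ^ j) • (pSym (j + 1) * eSym (n - j))) := by
        rw [hT, Finset.sum_range_succ, Nat.sub_self, (by rw [eSym] : eSym 0 = 1), mul_one,
          add_sub_cancel_left, smul_smul, ← mul_pow]
        norm_num
      rw [hrel, ← Ideal.Quotient.mkₐ_eq_mk ℚ I, map_smul, map_sub, map_smul, map_sum]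
      refine Subalgebra.smul_mem _ (sub_mem (Subalgebra.smul_mem _ ?_ _) ?_) _
      · rw [Ideal.Quotient.mkₐ_eq_mk ℚ I]; exact heSym (n + 1)
      · refine Subalgebra.sum_mem _ fun j hj => ?_
        rw [map_smul, map_mul]
        refine Subalgebra.smul_mem _ (mul_mem ?_ ?_) _
        · rw [Ideal.Quotient.mkₐ_eq_mk ℚ I]
          exact ih (j + 1) (by have := Finset.mem_range.mp hj; omega)
        · rw [Ideal.Quotient.mkₐ_eq_mk ℚ I]; exact heSym (n - j)
  constructor
  · -- surjectivity
    intro y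
    obtain ⟨g, rfl⟩ := Ideal.Quotient.mk_surjective y
    suffices h : Ideal.Quotient.mk I g ∈ (EQuotHom a r k).range by exact h
    induction g using MvPolynomial.induction_on with
    | C q =>
      rw [show (MvPolynomial.C q : SymmFn) = algebraMap ℚ SymmFn q from rfl,
        ← Ideal.Quotient.mkₐ_eq_mk ℚ I, AlgHom.commutes]
      exact Subalgebra.algebraMap_mem _ _
    | add p q hp hq => rw [map_add]; exact add_mem hp hq
    | mul_X p i hp =>
      rw [map_mul]
      exact mul_mem hp (by rw [← pSym_coe i]; exact hpSym (i : ℕ))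
  · -- kernel
    apply le_antisymm
    · intro g hg
      have h0 : EQuotHom a r k g = 0 := hg
      have h1 : aevalE a k g ∈ I := by
        rw [← Ideal.Quotient.eq_zero_iff_mem, ← EQuotHom_eq]
        exact h0
      have h2 : psiHom a k (aevalE a k g) ∈ Ideal.map (psiHom a k) I :=
        Ideal.mem_map_of_mem _ h1
      rw [psiHom_aevalE] at h2
      have hle : Ideal.map (psiHom a k) I ≤ M ^ r := by
        rw [hIsup, Ideal.map_sup, Ideal.map_pow]
        refine sup_le (Ideal.pow_right_mono ?_ r) ?_
        · rw [Uideal, Ideal.map_span]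
          refine Ideal.span_le.mpr ?_
          rintro x ⟨y, ⟨n, hn, rfl⟩, rfl⟩
          exact psiHom_uSym_mem a ha0 hA hn
        · rw [Egt, Ideal.map_span]
          refine Ideal.span_le.mpr ?_
          rintro x ⟨y, ⟨m, hm, rfl⟩, rfl⟩
          rw [SetLike.mem_coe, psiHom_eSym_gt a hm]
          exact zero_mem _
      exact hle h2
    · intro g hg
      have h2 : aevalE a k g ∈ Ideal.map (aevalE a k) (M ^ r) :=
        Ideal.mem_map_of_mem _ hg
      have hle : Ideal.map (aevalE a k) (M ^ r) ≤ I := by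
        rw [Ideal.map_pow]
        refine le_trans (Ideal.pow_right_mono ?_ r) hUr_le
        rw [hMdef, Ideal.map_span]
        refine Ideal.span_le.mpr ?_
        rintro x ⟨y, ⟨i, rfl⟩, rfl⟩
        rw [SetLike.mem_coe, aevalE, MvPolynomial.aeval_X]
        exact ESym_mem_Uideal a ha0 _
      have : EQuotHom a r k g = 0 := by
        rw [EQuotHom_eq, Ideal.Quotient.eq_zero_iff_mem]
        exact hle h2
      exact this

end Main


/-- For `r, k ≥ 1` with `|A| ≤ k`, the homomorphism
`ℚ[x₁, …, x_k] → Λ/(U^r + E_{>k})`, `x_i ↦ [E_i]`, is surjective with kernel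
`(x₁, …, x_k)^r`; in particular it induces an isomorphism
`ℚ[x₁, …, x_k]/(x₁, …, x_k)^r ≅ Λ/(U^r + E_{>k})`, so the classes of the monomials
`E_ν` (for `ν` with at most `k` columns and fewer than `r` rows) form a `ℚ`-basis. -/
theorem EQuotHom_surjective_ker (a : ℕ →₀ ℕ) (ha0 : a 0 = 0) (r k : ℕ)
    (hr : 1 ≤ r) (hk : 1 ≤ k) (hA : ∑ i ∈ a.support, i * a i ≤ k) :
    Function.Surjective (EQuotHom a r k) ∧
      RingHom.ker (EQuotHom a r k) =
        (Ideal.span (Set.range (MvPolynomial.X : Fin k → MvPolynomial (Fin k) ℚ))) ^ r :=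
  EQuotHom_surjective_ker' a ha0 r k hr hk hA

end
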